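/- Let k ≥ 10 be an integer and let t > 0 be defined by (1/√(2π)) ∫_t^∞ e^{-z²/2} dz = 2^{-k-2}. Then sqrt(k ln 2) ≤ t ≤ sqrt(2k). -/

import Mathlib

/-- The upper-tail probability of a standard Gaussian:
`Pr[Z > s] = (1/√(2π)) ∫_s^∞ e^{-z²/2} dz`. -/
noncomputable def gaussTail (s : ℝ) : ℝ :=
  (Real.sqrt (2 * Real.pi))⁻¹ * ∫ z in Set.Ioi s, Real.exp (-z ^ 2 / 2)


open MeasureTheory Real Set Filter

lemma gauss_integrable : Integrable (fun z : ℝ => Real.exp (-z ^ 2 / 2)) := by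
  have h := integrable_exp_neg_mul_sq (by norm_num : (0:ℝ) < 1/2)
  have : (fun z : ℝ => Real.exp (-z ^ 2 / 2)) = fun z : ℝ => Real.exp (-(1/2) * z ^ 2) := by
    funext z; ring_nf
  rw [this]; exact h

lemma gauss_mul_integrable : Integrable (fun z : ℝ => z * Real.exp (-z ^ 2 / 2)) := by
  have h := integrable_mul_exp_neg_mul_sq (by norm_num : (0:ℝ) < 1/2)
  have : (fun z : ℝ => z * Real.exp (-z ^ 2 / 2)) = fun z : ℝ => z * Real.exp (-(1/2) * z ^ 2) := by
    funext z; ring_nf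
  rw [this]; exact h

lemma gauss_moment (s : ℝ) : ∫ z in Ioi s, z * Real.exp (-z ^ 2 / 2) = Real.exp (-s ^ 2 / 2) := by
  have hderiv : ∀ x ∈ Ici s, HasDerivAt (fun x : ℝ => -Real.exp (-x ^ 2 / 2))
      (x * Real.exp (-x ^ 2 / 2)) x := by
    intro x _
    have h1 : HasDerivAt (fun x : ℝ => -x ^ 2 / 2) (-x) x := by
      have := ((hasDerivAt_pow 2 x).neg.div_const 2)
      refine this.congr_deriv ?_
      simp; ring
    have := (h1.exp).neg
    refine this.congr_deriv ?_
    ring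
  have htend : Tendsto (fun x : ℝ => -Real.exp (-x ^ 2 / 2)) atTop (nhds 0) := by
    rw [show (0:ℝ) = -0 by norm_num]
    apply Tendsto.neg
    apply Real.tendsto_exp_atBot.comp
    have : Tendsto (fun x : ℝ => x ^ 2 / 2) atTop atTop :=
      (tendsto_pow_atTop (by norm_num)).atTop_div_const (by norm_num)
    exact (tendsto_neg_atTop_atBot.comp this).congr (fun x => by simp only [Function.comp_apply]; ring)
  have := integral_Ioi_of_hasDerivAt_of_tendsto' hderiv
    (gauss_mul_integrable.integrableOn) htend
  rw [this]; ring

lemma gauss_tail_upper {s : ℝ} (hs : 1 ≤ s) :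
    ∫ z in Ioi s, Real.exp (-z ^ 2 / 2) ≤ Real.exp (-s ^ 2 / 2) := by
  rw [← gauss_moment s]
  apply setIntegral_mono_on gauss_integrable.integrableOn
    gauss_mul_integrable.integrableOn measurableSet_Ioi
  intro z hz
  have h1 : 1 ≤ z := hs.trans (le_of_lt hz)
  nlinarith [Real.exp_pos (-z ^ 2 / 2)]

lemma gauss_tail_lower {s : ℝ} (hs : 0 ≤ s) :
    Real.exp (-(s + 1) ^ 2 / 2) ≤ ∫ z in Ioi s, Real.exp (-z ^ 2 / 2) := by
  have h1 : ∫ z in Ioc s (s + 1), Real.exp (-z ^ 2 / 2) ≤ ∫ z in Ioi s, Real.exp (-z ^ 2 / 2) := by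
    apply setIntegral_mono_set gauss_integrable.integrableOn
    · exact Filter.Eventually.of_forall fun z => (Real.exp_pos _).le
    · exact HasSubset.Subset.eventuallyLE Ioc_subset_Ioi_self
  refine le_trans ?_ h1
  have h2 : ∫ _ in Ioc s (s + 1), Real.exp (-(s + 1) ^ 2 / 2) ≤
      ∫ z in Ioc s (s + 1), Real.exp (-z ^ 2 / 2) := by
    apply setIntegral_mono_on (integrableOn_const (by simp))
      gauss_integrable.integrableOn measurableSet_Ioc
    intro z hz
    apply Real.exp_le_exp.2
    have hz0 : 0 ≤ z := le_trans hs hz.1.le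
    have hz1 : z ≤ s + 1 := hz.2
    nlinarith
  refine le_trans ?_ h2
  rw [setIntegral_const]
  simp [Real.volume_Ioc]

lemma gauss_tail_anti {a b : ℝ} (hab : a ≤ b) :
    ∫ z in Ioi b, Real.exp (-z ^ 2 / 2) ≤ ∫ z in Ioi a, Real.exp (-z ^ 2 / 2) := by
  apply setIntegral_mono_set gauss_integrable.integrableOn
  · exact Filter.Eventually.of_forall fun z => (Real.exp_pos _).le
  · exact HasSubset.Subset.eventuallyLE (Ioi_subset_Ioi hab)

theorem stmt13 (k : ℕ) (t : ℝ) (hk : 10 ≤ k) (ht : 0 < t)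
    (htail : gaussTail t = 1 / 2 ^ (k + 2)) :
    Real.sqrt ((k : ℝ) * Real.log 2) ≤ t ∧ t ≤ Real.sqrt (2 * (k : ℝ)) := by
  have hkr : (10 : ℝ) ≤ (k : ℝ) := by exact_mod_cast hk
  have hl2a : (0.6931 : ℝ) < Real.log 2 := by
    linarith [Real.log_two_gt_d9]
  have hl2b : Real.log 2 < 0.6932 := by
    linarith [Real.log_two_lt_d9]
  set S := Real.sqrt (2 * Real.pi) with hS
  have hSpos : 0 < S := Real.sqrt_pos.2 (by positivity)
  have hS1 : 1 ≤ S := by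
    rw [hS, show (1:ℝ) = Real.sqrt 1 by simp]
    exact Real.sqrt_le_sqrt (by nlinarith [Real.pi_gt_three])
  have hS2 : S < 2.507 := by
    rw [hS]
    rw [show (2.507 : ℝ) = Real.sqrt (2.507 ^ 2) by
      rw [Real.sqrt_sq]; norm_num]
    apply Real.sqrt_lt_sqrt (by positivity)
    nlinarith [Real.pi_lt_d6]
  have hlogS : Real.log S < 1.507 := by
    have := Real.log_le_sub_one_of_pos hSpos
    linarith
  set a := Real.sqrt ((k : ℝ) * Real.log 2) with ha
  set b := Real.sqrt (2 * (k : ℝ)) with hb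
  have ha0 : 0 ≤ a := Real.sqrt_nonneg _
  have ha2 : a ^ 2 = (k : ℝ) * Real.log 2 := Real.sq_sqrt (by positivity)
  have ha263 : (2.63 : ℝ) ≤ a := by
    nlinarith [ha2, sq_nonneg a]
  have hb2 : b ^ 2 = 2 * (k : ℝ) := Real.sq_sqrt (by positivity)
  have hb1 : 1 ≤ b := by nlinarith [Real.sqrt_nonneg (2 * (k : ℝ))]
  have htpos : (0:ℝ) < 1 / 2 ^ (k + 2) := by positivity
  -- key inequality A : S⁻¹ * exp(-(a+1)^2/2) > 1/2^(k+2)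
  have keyA : 1 / 2 ^ (k + 2) < S⁻¹ * Real.exp (-(a + 1) ^ 2 / 2) := by
    have h1 : S / 2 ^ (k + 2) < Real.exp (-(a + 1) ^ 2 / 2) := by
      have hpow : ((2:ℝ) ^ (k + 2)) = Real.exp (((k:ℝ) + 2) * Real.log 2) := by
        rw [show ((k:ℝ) + 2) = ((k + 2 : ℕ) : ℝ) by push_cast; ring,
          ← Real.log_pow, Real.exp_log (by positivity)]
      rw [show S / 2 ^ (k+2) = Real.exp (Real.log S - ((k:ℝ) + 2) * Real.log 2) by
        rw [Real.exp_sub, ← hpow, Real.exp_log hSpos]]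
      apply Real.exp_lt_exp.2
      have hkl : (k : ℝ) * Real.log 2 = a ^ 2 := ha2.symm
      nlinarith [ha263, hlogS, hl2a]
    calc 1 / 2 ^ (k + 2) = S⁻¹ * (S / 2 ^ (k + 2)) := by
          field_simp
      _ < S⁻¹ * Real.exp (-(a + 1) ^ 2 / 2) := by
          apply mul_lt_mul_of_pos_left h1 (by positivity)
  -- key inequality B : S⁻¹ * exp(-b^2/2) < 1/2^(k+2)
  have keyB : S⁻¹ * Real.exp (-b ^ 2 / 2) < 1 / 2 ^ (k + 2) := by
    have h1 : Real.exp (-b ^ 2 / 2) < 1 / 2 ^ (k + 2) := by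
      rw [show -b ^ 2 / 2 = -(k:ℝ) by rw [hb2]; ring]
      rw [show (1:ℝ) / 2 ^ (k+2) = Real.exp (-(((k:ℝ) + 2) * Real.log 2)) by
        rw [Real.exp_neg, show ((k:ℝ) + 2) = ((k + 2 : ℕ) : ℝ) by push_cast; ring,
          ← Real.log_pow, Real.exp_log (by positivity), one_div]]
      apply Real.exp_lt_exp.2
      nlinarith
    calc S⁻¹ * Real.exp (-b ^ 2 / 2) ≤ 1 * Real.exp (-b ^ 2 / 2) := by
          apply mul_le_mul_of_nonneg_right _ (Real.exp_pos _).le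
          rw [inv_le_one_iff₀]; right; exact hS1
      _ < 1 / 2 ^ (k + 2) := by rwa [one_mul]
  constructor
  · by_contra hcon
    push_neg at hcon
    have hmono := gauss_tail_anti hcon.le
    have hlow := gauss_tail_lower ha0
    have : 1 / 2 ^ (k + 2) < gaussTail t := by
      calc 1 / 2 ^ (k + 2) < S⁻¹ * Real.exp (-(a + 1) ^ 2 / 2) := keyA
        _ ≤ S⁻¹ * ∫ z in Ioi t, Real.exp (-z ^ 2 / 2) := by
            apply mul_le_mul_of_nonneg_left (le_trans hlow hmono) (by positivity)
        _ = gaussTail t := rfl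
    linarith [this, htail.le]
  · by_contra hcon
    push_neg at hcon
    have hmono := gauss_tail_anti hcon.le
    have hupp := gauss_tail_upper hb1
    have : gaussTail t < 1 / 2 ^ (k + 2) := by
      calc gaussTail t = S⁻¹ * ∫ z in Ioi t, Real.exp (-z ^ 2 / 2) := rfl
        _ ≤ S⁻¹ * Real.exp (-b ^ 2 / 2) := by
            apply mul_le_mul_of_nonneg_left (le_trans hmono hupp) (by positivity)
        _ < 1 / 2 ^ (k + 2) := keyB
    linarith [this, htail.ge]
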